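/- Let R be an integral domain and a, b, c ∈ R^× with (a−b)(a−c)(b−c) ∈ R^×, and set Σ₁ = a+b+c, Σ₂ = ab+bc+ac, Σ₃ = abc. Then inside ℋ_3 the following equalities hold: (1) (s_i − a)(s_i − b)(s_i − c) = 0 for i ∈ {1,2}; (2) s_2² s_1 − s_1 s_2² = s_2 s_1² − s_1² s_2; (3) s_2 s_1² s_2 = −Σ₃ s_1 + Σ₂ s_1 s_2 + s_1 s_2 s_1² − Σ₁ s_1 s_2² + s_1² s_2². And inside ℋ_4 the following equalities hold: (4) s_2 s_3² = −s_1² s_3 + s_1² s_2 + s_2² s_3 − s_1 s_2² + s_1 s_3²; (5) s_2² s_3 s_1 = s_2 s_1² s_3 − s_1² s_2 s_3 + s_1 s_2² s_3; (6) s_2² s_3² = −Σ₃ s_1 + Σ₂ s_1 s_3 − Σ₁ s_1² s_3 + Σ₃ s_2 − Σ₂ s_2 s_3 + Σ₁ s_1² s_2 − s_1² s_2 s_3 + Σ₁ s_2² s_3 − Σ₁ s_1 s_2² + s_1 s_2² s_3 + s_1² s_3²; (7) s_2² s_3² = −Σ₃ s_1 + Σ₂ s_1 s_3 − Σ₁ s_1²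 s_3 + Σ₃ s_2 − Σ₂ s_2 s_3 + Σ₁ s_1² s_2 + Σ₁ s_2² s_3 − Σ₁ s_1 s_2² + s_1² s_3² + s_2² s_1 s_3 − s_2 s_1² s_3. -/
import Mathlib


noncomputable section
open scoped Classical Pointwise

namespace Cubic

/-- The braid relations on `m` generators. -/
def braidRels (m : ℕ) : Set (FreeGroup (Fin m)) :=
  { r | (∃ i j : Fin m, (i : ℕ) + 1 = (j : ℕ) ∧
          r = FreeGroup.of i * FreeGroup.of j * FreeGroup.of i *
              (FreeGroup.of j * FreeGroup.of i * FreeGroup.of j)⁻¹) ∨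
        (∃ i j : Fin m, (i : ℕ) + 2 ≤ (j : ℕ) ∧
          r = FreeGroup.of i * FreeGroup.of j * (FreeGroup.of j * FreeGroup.of i)⁻¹) }

/-- The braid group with `m` Artin generators, i.e. the braid group on `m+1` strands. -/
def BraidGroup (m : ℕ) : Type := PresentedGroup (braidRels m)

instance (m : ℕ) : Group (BraidGroup m) :=
  inferInstanceAs (Group (PresentedGroup (braidRels m)))

/-- The Artin generator with index `i`; this is `s_{i+1}` in the usual numbering. -/
def σ {m : ℕ} (i : Fin m) : BraidGroup m := PresentedGroup.of i

/-- The group algebra of the braid group with `m` Artin generators over `R`. -/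
abbrev BA (R : Type) [CommRing R] (m : ℕ) : Type := MonoidAlgebra R (BraidGroup m)

/-- The canonical image of a braid in the group algebra. -/
def ι {R : Type} [CommRing R] {m : ℕ} (g : BraidGroup m) : BA R m :=
  MonoidAlgebra.of R (BraidGroup m) g

/-- The congruence relation associated to a two-sided ideal. -/
def idRel {A : Type} [Ring A] (I : TwoSidedIdeal A) : A → A → Prop :=
  fun x y => x - y ∈ I

/-- Quotient of a ring by a two-sided ideal. -/
abbrev QuotI {A : Type} [Ring A] (I : TwoSidedIdeal A) : Type := RingQuot (idRel I)

section general
variable (R : Type) [CommRing R]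

/-- The cubic element `(s₁-a)(s₁-b)(s₁-c)` in the group algebra of the braid group
on `m+2` strands. -/
def cubicElt (a b c : R) (m : ℕ) : BA R (m+1) :=
  (ι (σ 0) - algebraMap R (BA R (m+1)) a) * (ι (σ 0) - algebraMap R (BA R (m+1)) b) *
    (ι (σ 0) - algebraMap R (BA R (m+1)) c)

/-- The defining two-sided ideal of the cubic Hecke algebra. -/
def cubicIdeal (a b c : R) (m : ℕ) : TwoSidedIdeal (BA R (m+1)) :=
  TwoSidedIdeal.span {cubicElt R a b c m}

/-- The cubic Hecke algebra `H_{m+2}` on `m+2` strands. -/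
abbrev Hecke (a b c : R) (m : ℕ) : Type := QuotI (cubicIdeal R a b c m)

/-- Canonical projection onto the cubic Hecke algebra. -/
def heckeMk (a b c : R) (m : ℕ) : BA R (m+1) →ₐ[R] Hecke R a b c m :=
  RingQuot.mkAlgHom R (idRel (cubicIdeal R a b c m))

/-- The quadratic element `(s₁-x)(s₁-y)`. -/
def quadElt (x y : R) (m : ℕ) : BA R (m+1) :=
  (ι (σ 0) - algebraMap R (BA R (m+1)) x) * (ι (σ 0) - algebraMap R (BA R (m+1)) y)

/-- The two-sided ideal `J_n(x,y)` generated by the quadratic relation. -/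
def J (x y : R) (m : ℕ) : TwoSidedIdeal (BA R (m+1)) :=
  TwoSidedIdeal.span {quadElt R x y m}

/-- The Iwahori–Hecke algebra `H_{m+2}(x,y)` with parameters `x`, `y`. -/
abbrev HeckeQ (x y : R) (m : ℕ) : Type := QuotI (J R x y m)

/-- Canonical projection onto the quadratic Hecke algebra. -/
def heckeQMk (x y : R) (m : ℕ) : BA R (m+1) →ₐ[R] HeckeQ R x y m :=
  RingQuot.mkAlgHom R (idRel (J R x y m))

/-- The tripled quadratic Hecke algebra `ℋ_{m+2}`. -/
abbrev TripleHecke (a b c : R) (m : ℕ) : Type :=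
  QuotI (J R a b m ⊓ J R a c m ⊓ J R b c m)

/-- Canonical projection onto the tripled quadratic Hecke algebra. -/
def tMk (a b c : R) (m : ℕ) : BA R (m+1) →ₐ[R] TripleHecke R a b c m :=
  RingQuot.mkAlgHom R (idRel (J R a b m ⊓ J R a c m ⊓ J R b c m))

/-- The element `𝐛 = s₂²s₁ - s₁s₂² - s₂s₁² + s₁²s₂`. -/
def bElt (m : ℕ) : BA R (m+1) :=
  ι (σ 1) ^ 2 * ι (σ 0) - ι (σ 0) * ι (σ 1) ^ 2 - ι (σ 1) * ι (σ 0) ^ 2 + ι (σ 0) ^ 2 * ι (σ 1)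

/-- The two-sided ideal of the cubic Hecke algebra generated by `𝐛`. -/
def bIdeal (a b c : R) (m : ℕ) : TwoSidedIdeal (Hecke R a b c m) :=
  TwoSidedIdeal.span {heckeMk R a b c m (bElt R m)}

/-- The algebra `𝒦_{m+2} = H_{m+2}(a,b,c)/(𝐛)`. -/
abbrev KAlg (a b c : R) (m : ℕ) : Type := QuotI (bIdeal R a b c m)

/-- Canonical projection onto `𝒦_{m+2}`. -/
def kMk (a b c : R) (m : ℕ) : BA R (m+1) →ₐ[R] KAlg R a b c m :=
  (RingQuot.mkAlgHom R (idRel (bIdeal R a b c m))).comp (heckeMk R a b c m)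

end general

/-- The Laurent polynomial ring `ℤ[a^{±1}, b^{±1}, c^{±1}]`. -/
abbrev LR : Type := AddMonoidAlgebra ℤ (Fin 3 →₀ ℤ)

/-- The Laurent variable with index `i` (so `a`, `b`, `c`). -/
def va (i : Fin 3) : LR := AddMonoidAlgebra.single (Finsupp.single i 1) 1

/-- The inverse of the Laurent variable with index `i`. -/
def vaInv (i : Fin 3) : LR := AddMonoidAlgebra.single (-(Finsupp.single i 1)) 1

/-- `r • g` as an element of the group algebra over `LR`. -/
def sg {m : ℕ} (g : BraidGroup m) (r : LR) : BA LR m := MonoidAlgebra.single g r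

/-- The element `r₁` of the group algebra of the braid group on `m+2` strands. -/
def r1Elt (m : ℕ) : BA LR (m+2) :=
  sg ((σ 0)⁻¹ * σ 1 * σ 0) 1 - sg (σ 0 * σ 1 * (σ 0)⁻¹) 1
  + sg (σ 0 * σ 1) (vaInv 0) - sg (σ 0 * (σ 1)⁻¹) (va 0) - sg ((σ 0)⁻¹ * σ 1) (va 0)
  + sg ((σ 0)⁻¹ * (σ 1)⁻¹) (va 0 ^ 3) - sg (σ 1 * σ 0) (vaInv 0) + sg (σ 1 * (σ 0)⁻¹) (va 0)
  + sg ((σ 1)⁻¹ * σ 0) (va 0) - sg ((σ 1)⁻¹ * (σ 0)⁻¹) (va 0 ^ 3)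
  - sg ((σ 0)⁻¹ * (σ 1)⁻¹ * σ 0) (va 0 ^ 2) + sg (σ 0 * (σ 1)⁻¹ * (σ 0)⁻¹) (va 0 ^ 2)

/-- The cubic Hecke algebra `H_{m+2}` over `ℤ[a^{±1},b^{±1},c^{±1}]`. -/
abbrev HLR (m : ℕ) : Type := Hecke LR (va 0) (va 1) (va 2) m

/-- Projection onto `H_{m+2}`. -/
def hMk (m : ℕ) : BA LR (m+1) →ₐ[LR] HLR m := heckeMk LR (va 0) (va 1) (va 2) m

/-- Image of a braid in `H_{m+2}`. -/
def hg {m : ℕ} (g : BraidGroup (m+1)) : HLR m := hMk m (ι g)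

/-- The two-sided ideal of `H_{m+2}` generated by (the image of) `r₁`. -/
def QIdeal (m : ℕ) : TwoSidedIdeal (HLR (m+1)) :=
  TwoSidedIdeal.span {hMk (m+1) (r1Elt m)}

/-- The maximal cubic quotient `Q_{m+3}`, so `Q₃ = QAlg 0`, `Q₄ = QAlg 1`, `Q₅ = QAlg 2`. -/
abbrev QAlg (m : ℕ) : Type := QuotI (QIdeal m)

/-- Projection onto `Q_{m+3}`. -/
def qMk (m : ℕ) : BA LR (m+2) →ₐ[LR] QAlg m :=
  (RingQuot.mkAlgHom LR (idRel (QIdeal m))).comp (hMk (m+1))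

/-- Image of a braid in `Q_{m+3}`. -/
def qg {m : ℕ} (g : BraidGroup (m+2)) : QAlg m := qMk m (ι g)


/-! ### Auxiliary lemmas for `statement7` -/

section BraidAux
variable {m : ℕ}

lemma braid_adj (i j : Fin m) (h : (i : ℕ) + 1 = (j : ℕ)) :
    σ i * σ j * σ i = σ j * σ i * σ j := by
  have hr : FreeGroup.of i * FreeGroup.of j * FreeGroup.of i *
      (FreeGroup.of j * FreeGroup.of i * FreeGroup.of j)⁻¹ ∈ braidRels m :=
    Or.inl ⟨i, j, h, rfl⟩
  have h1 : (PresentedGroup.mk (braidRels m)) (FreeGroup.of i * FreeGroup.of j * FreeGroup.of i *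
      (FreeGroup.of j * FreeGroup.of i * FreeGroup.of j)⁻¹) = 1 :=
    (QuotientGroup.eq_one_iff _).mpr (Subgroup.subset_normalClosure hr)
  rw [map_mul, map_inv, map_mul, map_mul, map_mul, map_mul, mul_inv_eq_one] at h1
  exact h1

lemma braid_comm (i j : Fin m) (h : (i : ℕ) + 2 ≤ (j : ℕ)) :
    σ i * σ j = σ j * σ i := by
  have hr : FreeGroup.of i * FreeGroup.of j * (FreeGroup.of j * FreeGroup.of i)⁻¹ ∈ braidRels m :=
    Or.inr ⟨i, j, h, rfl⟩
  have h1 : (PresentedGroup.mk (braidRels m)) (FreeGroup.of i * FreeGroup.of j *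
      (FreeGroup.of j * FreeGroup.of i)⁻¹) = 1 :=
    (QuotientGroup.eq_one_iff _).mpr (Subgroup.subset_normalClosure hr)
  rw [map_mul, map_inv, map_mul, map_mul, mul_inv_eq_one] at h1
  exact h1

lemma conj_gen (i j : Fin m) (h : σ i * σ j * σ i = σ j * σ i * σ j) :
    (σ i * σ j) * σ i * (σ i * σ j)⁻¹ = σ j := by
  rw [h]; group

lemma conj_sigma2 : ((σ 1 * σ 2) * (σ 0 * σ 1)) * σ 0 * ((σ 1 * σ 2) * (σ 0 * σ 1))⁻¹
    = (σ 2 : BraidGroup 3) := by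
  have h1 := conj_gen (0 : Fin 3) 1 (braid_adj 0 1 rfl)
  have h2 := conj_gen (1 : Fin 3) 2 (braid_adj 1 2 rfl)
  calc ((σ 1 * σ 2) * (σ 0 * σ 1)) * σ 0 * ((σ 1 * σ 2) * (σ 0 * σ 1))⁻¹
      = (σ 1 * σ 2) * ((σ 0 * σ 1) * σ 0 * (σ 0 * σ 1)⁻¹) * (σ 1 * σ 2)⁻¹ := by group
    _ = (σ 1 * σ 2) * σ 1 * (σ 1 * σ 2)⁻¹ := by rw [h1]
    _ = σ 2 := h2

end BraidAux

section QuotAux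
variable {R : Type} [CommRing R] {m : ℕ}

lemma ι_mul (g h : BraidGroup m) : (ι (g * h) : BA R m) = ι g * ι h :=
  map_mul (MonoidAlgebra.of R (BraidGroup m)) g h

lemma ι_one : (ι (1 : BraidGroup m) : BA R m) = 1 :=
  map_one (MonoidAlgebra.of R (BraidGroup m))

lemma conj_quad (x y : R) (m : ℕ) (w : BraidGroup (m+1)) :
    (ι (w * σ 0 * w⁻¹) - algebraMap R (BA R (m+1)) x) *
      (ι (w * σ 0 * w⁻¹) - algebraMap R (BA R (m+1)) y)
    = ι w * quadElt R x y m * ι w⁻¹ := by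
  simp only [quadElt, sub_mul, mul_sub, Algebra.algebraMap_eq_smul_one, smul_mul_assoc,
    mul_smul_comm, one_mul, mul_one, smul_smul, ← ι_mul, mul_assoc, inv_mul_cancel_left,
    mul_inv_cancel_left, mul_inv_cancel, inv_mul_cancel, ι_one]

lemma quad_conj_mem (x y : R) (m : ℕ) (w : BraidGroup (m+1)) :
    (ι (w * σ 0 * w⁻¹) - algebraMap R (BA R (m+1)) x) *
      (ι (w * σ 0 * w⁻¹) - algebraMap R (BA R (m+1)) y) ∈ J R x y m := by
  rw [conj_quad]
  exact (J R x y m).mul_mem_right _ _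
    ((J R x y m).mul_mem_left _ _ (TwoSidedIdeal.subset_span rfl))

lemma mem_of_heckeQMk_eq {x y : R} {u v : BA R (m+1)}
    (h : heckeQMk R x y m u = heckeQMk R x y m v) : u - v ∈ J R x y m := by
  set c := (J R x y m).ringCon with hc
  have hl : ∀ ⦃p q : BA R (m+1)⦄, idRel (J R x y m) p q → c.mk' p = c.mk' q := by
    intro p q hpq
    exact RingCon.eq c |>.mpr (((J R x y m).rel_iff p q).mpr hpq)
  have h' : RingQuot.mkRingHom (idRel (J R x y m)) u
      = RingQuot.mkRingHom (idRel (J R x y m)) v := by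
    have h2 : ((heckeQMk R x y m : BA R (m+1) →+* HeckeQ R x y m)) u
        = ((heckeQMk R x y m : BA R (m+1) →+* HeckeQ R x y m)) v := by
      simpa using h
    rwa [heckeQMk, RingQuot.mkAlgHom_coe] at h2
  have h3 := congrArg (RingQuot.lift ⟨c.mk', hl⟩) h'
  rw [RingQuot.lift_mkRingHom_apply, RingQuot.lift_mkRingHom_apply] at h3
  exact ((J R x y m).rel_iff u v).mp ((RingCon.eq c).mp h3)

lemma tMk_eq_of (a b c : R) {u v : BA R (m+1)}
    (h1 : heckeQMk R a b m u = heckeQMk R a b m v)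
    (h2 : heckeQMk R a c m u = heckeQMk R a c m v)
    (h3 : heckeQMk R b c m u = heckeQMk R b c m v) :
    tMk R a b c m u = tMk R a b c m v := by
  refine RingQuot.mkAlgHom_rel R ?_
  show u - v ∈ _
  rw [TwoSidedIdeal.mem_inf, TwoSidedIdeal.mem_inf]
  exact ⟨⟨mem_of_heckeQMk_eq h1, mem_of_heckeQMk_eq h2⟩, mem_of_heckeQMk_eq h3⟩

lemma heckeQ_rel (x y : R) (g : BraidGroup (m+1))
    (hmem : (ι g - algebraMap R (BA R (m+1)) x) * (ι g - algebraMap R (BA R (m+1)) y)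
      ∈ J R x y m) :
    heckeQMk R x y m (ι g) * heckeQMk R x y m (ι g)
      = (x + y) • heckeQMk R x y m (ι g) - (x * y) • 1 := by
  set G := heckeQMk R x y m (ι g) with hG
  have h0 : heckeQMk R x y m ((ι g - algebraMap R (BA R (m+1)) x) *
      (ι g - algebraMap R (BA R (m+1)) y)) = 0 := by
    have hrel : idRel (J R x y m) ((ι g - algebraMap R (BA R (m+1)) x) *
        (ι g - algebraMap R (BA R (m+1)) y)) 0 := by simpa [idRel] using hmem
    have := RingQuot.mkAlgHom_rel R hrel
    simpa [heckeQMk] using this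
  have h1 : (G - x • 1) * (G - y • 1) = 0 := by
    rw [map_mul, map_sub, map_sub] at h0
    simpa [Algebra.algebraMap_eq_smul_one, ← hG] using h0
  have h2 : G * G = (G - x • 1) * (G - y • 1) + (x + y) • G - (x * y) • 1 := by
    simp only [mul_sub, sub_mul, smul_mul_assoc, mul_smul_comm, one_mul, mul_one, smul_smul]
    module
  rw [h2, h1, zero_add]

lemma rel_s0 (x y : R) (m : ℕ) :
    heckeQMk R x y m (ι (σ 0)) * heckeQMk R x y m (ι (σ 0))
      = (x + y) • heckeQMk R x y m (ι (σ 0)) - (x * y) • 1 := by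
  refine heckeQ_rel x y (σ 0) ?_
  rw [show (σ 0 : BraidGroup (m+1)) = 1 * σ 0 * 1⁻¹ by group]
  exact quad_conj_mem x y m 1

lemma rel_s1_two (x y : R) :
    heckeQMk R x y 1 (ι (σ 1)) * heckeQMk R x y 1 (ι (σ 1))
      = (x + y) • heckeQMk R x y 1 (ι (σ 1)) - (x * y) • 1 := by
  refine heckeQ_rel x y (σ 1) ?_
  rw [show (σ 1 : BraidGroup 2) = (σ 0 * σ 1) * σ 0 * (σ 0 * σ 1)⁻¹ from
    (conj_gen (0 : Fin 2) 1 (braid_adj 0 1 rfl)).symm]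
  exact quad_conj_mem x y 1 (σ 0 * σ 1)

lemma rel_s1_three (x y : R) :
    heckeQMk R x y 2 (ι (σ 1)) * heckeQMk R x y 2 (ι (σ 1))
      = (x + y) • heckeQMk R x y 2 (ι (σ 1)) - (x * y) • 1 := by
  refine heckeQ_rel x y (σ 1) ?_
  rw [show (σ 1 : BraidGroup 3) = (σ 0 * σ 1) * σ 0 * (σ 0 * σ 1)⁻¹ from
    (conj_gen (0 : Fin 3) 1 (braid_adj 0 1 rfl)).symm]
  exact quad_conj_mem x y 2 (σ 0 * σ 1)

lemma rel_s2_three (x y : R) :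
    heckeQMk R x y 2 (ι (σ 2)) * heckeQMk R x y 2 (ι (σ 2))
      = (x + y) • heckeQMk R x y 2 (ι (σ 2)) - (x * y) • 1 := by
  refine heckeQ_rel x y (σ 2) ?_
  rw [show (σ 2 : BraidGroup 3) = ((σ 1 * σ 2) * (σ 0 * σ 1)) * σ 0 *
      ((σ 1 * σ 2) * (σ 0 * σ 1))⁻¹ from conj_sigma2.symm]
  exact quad_conj_mem x y 2 ((σ 1 * σ 2) * (σ 0 * σ 1))

lemma rel_braid_two (x y : R) :
    heckeQMk R x y 1 (ι (σ 1)) * (heckeQMk R x y 1 (ι (σ 0)) * heckeQMk R x y 1 (ι (σ 1)))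
      = heckeQMk R x y 1 (ι (σ 0)) * (heckeQMk R x y 1 (ι (σ 1)) * heckeQMk R x y 1 (ι (σ 0))) := by
  have hg : (σ 1 : BraidGroup 2) * (σ 0 * σ 1) = σ 0 * (σ 1 * σ 0) := by
    rw [← mul_assoc, ← mul_assoc]; exact (braid_adj 0 1 rfl).symm
  have h := congrArg (fun g => heckeQMk R x y 1 (ι g)) hg
  simp only [ι_mul, map_mul] at h
  exact h

lemma rel_comm_three (x y : R) :
    heckeQMk R x y 2 (ι (σ 2)) * heckeQMk R x y 2 (ι (σ 0))
      = heckeQMk R x y 2 (ι (σ 0)) * heckeQMk R x y 2 (ι (σ 2)) := by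
  have hg : (σ 2 : BraidGroup 3) * σ 0 = σ 0 * σ 2 := (braid_comm 0 2 (by norm_num)).symm
  have h := congrArg (fun g => heckeQMk R x y 2 (ι g)) hg
  simp only [ι_mul, map_mul] at h
  exact h

end QuotAux

section AbsAux
variable {R : Type} [CommRing R] {T : Type} [Ring T] [Algebra R T]

lemma sqr {A : T} {e f : R} (h : A * A = e • A - f • 1) (z : T) :
    A * (A * z) = e • (A * z) - f • z := by
  rw [← mul_assoc, h, sub_mul, smul_mul_assoc, smul_mul_assoc, one_mul]

lemma commr {A C : T} (h : C * A = A * C) (z : T) : C * (A * z) = A * (C * z) := by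
  rw [← mul_assoc, h, mul_assoc]

lemma linComm (u v : R) (A : T) : (A - u • 1) * (A - v • 1) = (A - v • 1) * (A - u • 1) := by
  simp only [mul_sub, sub_mul, smul_mul_assoc, mul_smul_comm, one_mul, mul_one, smul_smul]
  module

lemma idOne (x y z : R) (A : T) (h : A * A = (x + y) • A - (x * y) • 1) :
    (A - x • 1) * (A - y • 1) * (A - z • 1) = 0 := by
  simp only [mul_sub, sub_mul, smul_mul_assoc, mul_smul_comm, one_mul, mul_one, smul_smul,
    mul_assoc, h, sqr h, smul_sub, smul_add]
  module

lemma idTwo (e f : R) (A B : T) (hA : A * A = e • A - f • 1) (hB : B * B = e • B - f • 1) :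
    B ^ 2 * A - A * B ^ 2 = B * A ^ 2 - A ^ 2 * B := by
  simp only [pow_two, mul_assoc, hA, hB, sqr hA, sqr hB, mul_sub, sub_mul, mul_add, add_mul,
    smul_mul_assoc, mul_smul_comm, one_mul, mul_one, smul_smul, smul_sub, smul_add]
  module

lemma idThree (x y z S1 S2 S3 : R) (A B : T)
    (hA : A * A = (x + y) • A - (x * y) • 1) (hB : B * B = (x + y) • B - (x * y) • 1)
    (hbr : B * (A * B) = A * (B * A))
    (h1 : S1 = x + y + z) (h2 : S2 = x * y + y * z + x * z) (h3 : S3 = x * y * z) :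
    B * A ^ 2 * B = -(S3 • A) + S2 • (A * B) + A * B * A ^ 2 - S1 • (A * B ^ 2)
      + A ^ 2 * B ^ 2 := by
  subst h1; subst h2; subst h3
  simp only [pow_two, mul_assoc, hA, hB, sqr hA, sqr hB, hbr, mul_sub, sub_mul, mul_add, add_mul,
    smul_mul_assoc, mul_smul_comm, one_mul, mul_one, smul_smul, smul_sub, smul_add]
  module

lemma idFour (e f : R) (A B C : T) (hA : A * A = e • A - f • 1) (hB : B * B = e • B - f • 1)
    (hC : C * C = e • C - f • 1) :
    B * C ^ 2 = -(A ^ 2 * C) + A ^ 2 * B + B ^ 2 * C - A * B ^ 2 + A * C ^ 2 := by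
  simp only [pow_two, mul_assoc, hA, hB, hC, sqr hA, sqr hB, sqr hC, mul_sub, sub_mul, mul_add,
    add_mul, smul_mul_assoc, mul_smul_comm, one_mul, mul_one, smul_smul, smul_sub, smul_add]
  module

lemma idFive (e f : R) (A B C : T) (hA : A * A = e • A - f • 1) (hB : B * B = e • B - f • 1)
    (hAC : C * A = A * C) :
    B ^ 2 * C * A = B * A ^ 2 * C - A ^ 2 * B * C + A * B ^ 2 * C := by
  simp only [pow_two, mul_assoc, hA, hB, sqr hA, sqr hB, hAC, commr hAC, mul_sub, sub_mul,
    mul_add, add_mul, smul_mul_assoc, mul_smul_comm, one_mul, mul_one, smul_smul, smul_sub,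
    smul_add]
  module

lemma idSix (x y z S1 S2 S3 : R) (A B C : T)
    (hA : A * A = (x + y) • A - (x * y) • 1) (hB : B * B = (x + y) • B - (x * y) • 1)
    (hC : C * C = (x + y) • C - (x * y) • 1)
    (h1 : S1 = x + y + z) (h2 : S2 = x * y + y * z + x * z) (h3 : S3 = x * y * z) :
    B ^ 2 * C ^ 2 = -(S3 • A) + S2 • (A * C) - S1 • (A ^ 2 * C) + S3 • B - S2 • (B * C)
      + S1 • (A ^ 2 * B) - A ^ 2 * B * C + S1 • (B ^ 2 * C) - S1 • (A * B ^ 2)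
      + A * B ^ 2 * C + A ^ 2 * C ^ 2 := by
  subst h1; subst h2; subst h3
  simp only [pow_two, mul_assoc, hA, hB, hC, sqr hA, sqr hB, sqr hC, mul_sub, sub_mul, mul_add,
    add_mul, smul_mul_assoc, mul_smul_comm, one_mul, mul_one, smul_smul, smul_sub, smul_add]
  module

lemma idSeven (x y z S1 S2 S3 : R) (A B C : T)
    (hA : A * A = (x + y) • A - (x * y) • 1) (hB : B * B = (x + y) • B - (x * y) • 1)
    (hC : C * C = (x + y) • C - (x * y) • 1) (hAC : C * A = A * C)
    (h1 : S1 = x + y + z) (h2 : S2 = x * y + y * z + x * z) (h3 : S3 = x * y * z) :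
    B ^ 2 * C ^ 2 = -(S3 • A) + S2 • (A * C) - S1 • (A ^ 2 * C) + S3 • B - S2 • (B * C)
      + S1 • (A ^ 2 * B) + S1 • (B ^ 2 * C) - S1 • (A * B ^ 2) + A ^ 2 * C ^ 2
      + B ^ 2 * A * C - B * A ^ 2 * C := by
  subst h1; subst h2; subst h3
  simp only [pow_two, mul_assoc, hA, hB, hC, sqr hA, sqr hB, sqr hC, hAC, commr hAC, mul_sub,
    sub_mul, mul_add, add_mul, smul_mul_assoc, mul_smul_comm, one_mul, mul_one, smul_smul,
    smul_sub, smul_add]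
  module

end AbsAux

set_option maxHeartbeats 3200000 in
/-- Let `R` be an integral domain and `a, b, c ∈ R^×` with
`(a-b)(a-c)(b-c) ∈ R^×`, and set `Σ₁ = a+b+c`, `Σ₂ = ab+bc+ac`, `Σ₃ = abc`.  Then the
listed identities (1)–(3) hold inside `ℋ₃` and the identities (4)–(7) hold inside `ℋ₄`. -/
theorem statement7 (R : Type) [CommRing R] [IsDomain R] (a b c : R)
    (ha : IsUnit a) (hb : IsUnit b) (hc : IsUnit c)
    (h : IsUnit ((a - b) * (a - c) * (b - c))) :
    let S1 := a + b + c
    let S2 := a * b + b * c + a * c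
    let S3 := a * b * c
    let C3 := algebraMap R (TripleHecke R a b c 1)
    let s : Fin 2 → TripleHecke R a b c 1 := fun i => tMk R a b c 1 (ι (σ i))
    let C4 := algebraMap R (TripleHecke R a b c 2)
    let t : Fin 3 → TripleHecke R a b c 2 := fun i => tMk R a b c 2 (ι (σ i))
    (∀ i : Fin 2, (s i - C3 a) * (s i - C3 b) * (s i - C3 c) = 0) ∧
    (s 1 ^ 2 * s 0 - s 0 * s 1 ^ 2 = s 1 * s 0 ^ 2 - s 0 ^ 2 * s 1) ∧
    (s 1 * s 0 ^ 2 * s 1 = -(C3 S3 * s 0) + C3 S2 * (s 0 * s 1) + s 0 * s 1 * s 0 ^ 2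
      - C3 S1 * (s 0 * s 1 ^ 2) + s 0 ^ 2 * s 1 ^ 2) ∧
    (t 1 * t 2 ^ 2 =
      -(t 0 ^ 2 * t 2) + t 0 ^ 2 * t 1 + t 1 ^ 2 * t 2 - t 0 * t 1 ^ 2 + t 0 * t 2 ^ 2) ∧
    (t 1 ^ 2 * t 2 * t 0 = t 1 * t 0 ^ 2 * t 2 - t 0 ^ 2 * t 1 * t 2 + t 0 * t 1 ^ 2 * t 2) ∧
    (t 1 ^ 2 * t 2 ^ 2 = -(C4 S3 * t 0) + C4 S2 * (t 0 * t 2) - C4 S1 * (t 0 ^ 2 * t 2)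
      + C4 S3 * t 1 - C4 S2 * (t 1 * t 2) + C4 S1 * (t 0 ^ 2 * t 1) - t 0 ^ 2 * t 1 * t 2
      + C4 S1 * (t 1 ^ 2 * t 2) - C4 S1 * (t 0 * t 1 ^ 2) + t 0 * t 1 ^ 2 * t 2
      + t 0 ^ 2 * t 2 ^ 2) ∧
    (t 1 ^ 2 * t 2 ^ 2 = -(C4 S3 * t 0) + C4 S2 * (t 0 * t 2) - C4 S1 * (t 0 ^ 2 * t 2)
      + C4 S3 * t 1 - C4 S2 * (t 1 * t 2) + C4 S1 * (t 0 ^ 2 * t 1)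
      + C4 S1 * (t 1 ^ 2 * t 2) - C4 S1 * (t 0 * t 1 ^ 2) + t 0 ^ 2 * t 2 ^ 2
      + t 1 ^ 2 * t 0 * t 2 - t 1 * t 0 ^ 2 * t 2) := by
  intro S1 S2 S3 C3 s C4 t
  have hS1 : S1 = a + b + c := rfl
  have hS2 : S2 = a * b + b * c + a * c := rfl
  have hS3 : S3 = a * b * c := rfl
  have hC3 : ∀ r : R, C3 r = tMk R a b c 1 (algebraMap R (BA R 2) r) :=
    fun r => ((tMk R a b c 1).commutes r).symm
  have hC4 : ∀ r : R, C4 r = tMk R a b c 2 (algebraMap R (BA R 3) r) :=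
    fun r => ((tMk R a b c 2).commutes r).symm
  have hs : ∀ i, s i = tMk R a b c 1 (ι (σ i)) := fun i => rfl
  have ht : ∀ i, t i = tMk R a b c 2 (ι (σ i)) := fun i => rfl
  refine ⟨?_, ?_, ?_, ?_, ?_, ?_, ?_⟩
  -- (1)
  · intro i
    have relg : ∀ x y : R, heckeQMk R x y 1 (ι (σ i)) * heckeQMk R x y 1 (ι (σ i))
        = (x + y) • heckeQMk R x y 1 (ι (σ i)) - (x * y) • 1 := by
      intro x y; fin_cases i
      · exact rel_s0 x y 1
      · exact rel_s1_two x y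
    rw [show (0 : TripleHecke R a b c 1) = tMk R a b c 1 0 from (map_zero _).symm]
    simp only [hs, hC3, ← map_sub, ← map_mul]
    refine tMk_eq_of a b c ?_ ?_ ?_
    · simp only [map_mul, map_sub, map_zero, AlgHom.commutes]
      simp only [Algebra.algebraMap_eq_smul_one]
      exact idOne a b c _ (relg a b)
    · simp only [map_mul, map_sub, map_zero, AlgHom.commutes]
      simp only [Algebra.algebraMap_eq_smul_one]
      rw [mul_assoc, linComm b c, ← mul_assoc]
      exact idOne a c b _ (relg a c)
    · simp only [map_mul, map_sub, map_zero, AlgHom.commutes]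
      simp only [Algebra.algebraMap_eq_smul_one]
      rw [linComm a b, mul_assoc, linComm a c, ← mul_assoc]
      exact idOne b c a _ (relg b c)
  -- (2)
  · simp only [hs, ← map_pow, ← map_mul, ← map_sub]
    refine tMk_eq_of a b c ?_ ?_ ?_
    · simp only [map_mul, map_pow, map_sub]
      exact idTwo (a + b) (a * b) _ _ (rel_s0 a b 1) (rel_s1_two a b)
    · simp only [map_mul, map_pow, map_sub]
      exact idTwo (a + c) (a * c) _ _ (rel_s0 a c 1) (rel_s1_two a c)
    · simp only [map_mul, map_pow, map_sub]
      exact idTwo (b + c) (b * c) _ _ (rel_s0 b c 1) (rel_s1_two b c)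
  -- (3)
  · simp only [hs, hC3, ← map_pow, ← map_mul, ← map_sub, ← map_add, ← map_neg]
    refine tMk_eq_of a b c ?_ ?_ ?_
    · simp only [map_mul, map_pow, map_sub, map_add, map_neg, map_smul, AlgHom.commutes,
        ← Algebra.smul_def]
      exact idThree a b c S1 S2 S3 _ _ (rel_s0 a b 1) (rel_s1_two a b) (rel_braid_two a b)
        (by rw [hS1]; try ring) (by rw [hS2]; try ring) (by rw [hS3]; try ring)
    · simp only [map_mul, map_pow, map_sub, map_add, map_neg, map_smul, AlgHom.commutes,
        ← Algebra.smul_def]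
      exact idThree a c b S1 S2 S3 _ _ (rel_s0 a c 1) (rel_s1_two a c) (rel_braid_two a c)
        (by rw [hS1]; try ring) (by rw [hS2]; try ring) (by rw [hS3]; try ring)
    · simp only [map_mul, map_pow, map_sub, map_add, map_neg, map_smul, AlgHom.commutes,
        ← Algebra.smul_def]
      exact idThree b c a S1 S2 S3 _ _ (rel_s0 b c 1) (rel_s1_two b c) (rel_braid_two b c)
        (by rw [hS1]; try ring) (by rw [hS2]; try ring) (by rw [hS3]; try ring)
  -- (4)
  · simp only [ht, ← map_pow, ← map_mul, ← map_sub, ← map_add, ← map_neg]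
    refine tMk_eq_of a b c ?_ ?_ ?_
    · simp only [map_mul, map_pow, map_sub, map_add, map_neg]
      exact idFour (a + b) (a * b) _ _ _ (rel_s0 a b 2) (rel_s1_three a b) (rel_s2_three a b)
    · simp only [map_mul, map_pow, map_sub, map_add, map_neg]
      exact idFour (a + c) (a * c) _ _ _ (rel_s0 a c 2) (rel_s1_three a c) (rel_s2_three a c)
    · simp only [map_mul, map_pow, map_sub, map_add, map_neg]
      exact idFour (b + c) (b * c) _ _ _ (rel_s0 b c 2) (rel_s1_three b c) (rel_s2_three b c)
  -- (5)
  · simp only [ht, ← map_pow, ← map_mul, ← map_sub, ← map_add]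
    refine tMk_eq_of a b c ?_ ?_ ?_
    · simp only [map_mul, map_pow, map_sub, map_add]
      exact idFive (a + b) (a * b) _ _ _ (rel_s0 a b 2) (rel_s1_three a b) (rel_comm_three a b)
    · simp only [map_mul, map_pow, map_sub, map_add]
      exact idFive (a + c) (a * c) _ _ _ (rel_s0 a c 2) (rel_s1_three a c) (rel_comm_three a c)
    · simp only [map_mul, map_pow, map_sub, map_add]
      exact idFive (b + c) (b * c) _ _ _ (rel_s0 b c 2) (rel_s1_three b c) (rel_comm_three b c)
  -- (6)
  · simp only [ht, hC4, ← map_pow, ← map_mul, ← map_sub, ← map_add, ← map_neg]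
    refine tMk_eq_of a b c ?_ ?_ ?_
    · simp only [map_mul, map_pow, map_sub, map_add, map_neg, map_smul, AlgHom.commutes,
        ← Algebra.smul_def]
      exact idSix a b c S1 S2 S3 _ _ _ (rel_s0 a b 2) (rel_s1_three a b) (rel_s2_three a b)
        (by rw [hS1]; try ring) (by rw [hS2]; try ring) (by rw [hS3]; try ring)
    · simp only [map_mul, map_pow, map_sub, map_add, map_neg, map_smul, AlgHom.commutes,
        ← Algebra.smul_def]
      exact idSix a c b S1 S2 S3 _ _ _ (rel_s0 a c 2) (rel_s1_three a c) (rel_s2_three a c)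
        (by rw [hS1]; try ring) (by rw [hS2]; try ring) (by rw [hS3]; try ring)
    · simp only [map_mul, map_pow, map_sub, map_add, map_neg, map_smul, AlgHom.commutes,
        ← Algebra.smul_def]
      exact idSix b c a S1 S2 S3 _ _ _ (rel_s0 b c 2) (rel_s1_three b c) (rel_s2_three b c)
        (by rw [hS1]; try ring) (by rw [hS2]; try ring) (by rw [hS3]; try ring)
  -- (7)
  · simp only [ht, hC4, ← map_pow, ← map_mul, ← map_sub, ← map_add, ← map_neg]
    refine tMk_eq_of a b c ?_ ?_ ?_
    · simp only [map_mul, map_pow, map_sub, map_add, map_neg, map_smul, AlgHom.commutes,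
        ← Algebra.smul_def]
      exact idSeven a b c S1 S2 S3 _ _ _ (rel_s0 a b 2) (rel_s1_three a b) (rel_s2_three a b)
        (rel_comm_three a b) (by rw [hS1]; try ring) (by rw [hS2]; try ring) (by rw [hS3]; try ring)
    · simp only [map_mul, map_pow, map_sub, map_add, map_neg, map_smul, AlgHom.commutes,
        ← Algebra.smul_def]
      exact idSeven a c b S1 S2 S3 _ _ _ (rel_s0 a c 2) (rel_s1_three a c) (rel_s2_three a c)
        (rel_comm_three a c) (by rw [hS1]; try ring) (by rw [hS2]; try ring) (by rw [hS3]; try ring)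
    · simp only [map_mul, map_pow, map_sub, map_add, map_neg, map_smul, AlgHom.commutes,
        ← Algebra.smul_def]
      exact idSeven b c a S1 S2 S3 _ _ _ (rel_s0 b c 2) (rel_s1_three b c) (rel_s2_three b c)
        (rel_comm_three b c) (by rw [hS1]; try ring) (by rw [hS2]; try ring) (by rw [hS3]; try ring)

end Cubic
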